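/- The map f has a Lorenz-like singularity at c̃ with right order ℓ^+ := α^+/(α^+ + 1) ∈ (0,1) and left order ℓ^− := α^−/(α^− + 1) ∈ (0,1): there exist L > 0 and δ₁ > 0 such that for every x ∈ (c̃, c̃ + δ₁), L^{−1} |x − c̃|^{−ℓ^+} ≤ |f′(x)| ≤ L |x − c̃|^{−ℓ^+}, and for every x ∈ (c̃ − δ₁, c̃), L^{−1} |x − c̃|^{−ℓ^−} ≤ |f′(x)| ≤ L |x − c̃|^{−ℓ^−}. -/

import Mathlib

set_option maxHeartbeats 1000000
set_option linter.deprecated false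
set_option linter.unusedVariables false

open MeasureTheory Filter Set Topology

private lemma aux_mono {F F' : ℝ → ℝ} {a b : ℝ}
    (hc : ContinuousOn F (Set.Icc a b))
    (hd : ∀ z ∈ Set.Ioo a b, HasDerivAt F (F' z) z)
    (hnn : ∀ z ∈ Set.Ioo a b, 0 ≤ F' z) : MonotoneOn F (Set.Icc a b) := by
  apply monotoneOn_of_deriv_nonneg (convex_Icc a b) hc
  · rw [interior_Icc]
    exact fun z hz => ((hd z hz).differentiableAt).differentiableWithinAt
  · intro z hz
    rw [interior_Icc] at hz
    rw [(hd z hz).deriv]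
    exact hnn z hz

private lemma aux_est {α M lam m M2 t u p g D : ℝ} (hα : 0 < α) (hM : 0 < M) (hlam : 0 < lam)
    (hm : 0 < m) (ht : 0 < t) (hu : 0 < u) (hp : 0 < p)
    (h1 : Real.exp (-M) * t ^ (α+1) / (α+1) ≤ u)
    (h2 : u ≤ Real.exp M * t ^ (α+1) / (α+1))
    (h3 : Real.exp (-M) * t ^ α ≤ p) (h4 : p ≤ Real.exp M * t ^ α)
    (hD : D = lam * g / p) (hg1 : m ≤ g) (hg2 : g ≤ M2) :
    lam * m / ((α+1) * Real.exp (2*M)) * u ^ (-(α/(α+1))) ≤ D ∧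
      D ≤ lam * M2 * Real.exp (2*M) * u ^ (-(α/(α+1))) := by
  have hα1 : (0:ℝ) < α + 1 := by linarith
  set ℓ : ℝ := α / (α + 1) with hℓdef
  have hℓ0 : 0 < ℓ := div_pos hα hα1
  have hℓ1 : ℓ ≤ 1 := by rw [div_le_one hα1]; linarith
  have hv : 0 < u ^ ℓ := Real.rpow_pos_of_pos hu ℓ
  set v : ℝ := u ^ ℓ with hvdef
  have hEE : Real.exp (-M) * Real.exp M = 1 := by
    rw [← Real.exp_add]; simp
  have hE2 : Real.exp (2*M) = Real.exp M * Real.exp M := by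
    rw [← Real.exp_add]; ring_nf
  have h1' : Real.exp (-M) * t ^ (α+1) ≤ u * (α+1) := (div_le_iff₀ hα1).mp h1
  have h2' : u * (α+1) ≤ Real.exp M * t ^ (α+1) := (le_div_iff₀ hα1).mp h2
  have htp : 0 ≤ t ^ (α+1) := (Real.rpow_pos_of_pos ht _).le
  have e1 : t ^ (α+1) ≤ (α+1) * u * Real.exp M := by
    nlinarith [mul_le_mul_of_nonneg_right h1' (Real.exp_pos M).le]
  have e2 : (α+1) * u * Real.exp (-M) ≤ t ^ (α+1) := by
    nlinarith [mul_le_mul_of_nonneg_right h2' (Real.exp_pos (-M)).le]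
  have tp : t ^ α = (t ^ (α+1)) ^ ℓ := by
    rw [← Real.rpow_mul ht.le]
    congr 1
    rw [hℓdef]
    field_simp
  -- upper bound on t ^ α
  have hA1 : (1:ℝ) ≤ (α+1) * Real.exp M := by
    nlinarith [Real.one_le_exp hM.le]
  have tub : t ^ α ≤ (α+1) * Real.exp M * v := by
    rw [tp]
    calc (t ^ (α+1)) ^ ℓ ≤ ((α+1) * u * Real.exp M) ^ ℓ :=
          Real.rpow_le_rpow htp e1 hℓ0.le
      _ = ((α+1) * Real.exp M * u) ^ ℓ := by ring_nf
      _ = ((α+1) * Real.exp M) ^ ℓ * v := by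
          rw [Real.mul_rpow (by positivity) hu.le]
      _ ≤ ((α+1) * Real.exp M) ^ (1:ℝ) * v :=
          mul_le_mul_of_nonneg_right (Real.rpow_le_rpow_of_exponent_le hA1 hℓ1) hv.le
      _ = (α+1) * Real.exp M * v := by rw [Real.rpow_one]
  -- lower bound on t ^ α
  have tlb : Real.exp (-M) * v ≤ t ^ α := by
    rw [tp]
    have k1 : Real.exp (-M) ≤ Real.exp (-M) ^ ℓ := by
      rw [← Real.exp_mul]
      exact Real.exp_le_exp.2 (by nlinarith)
    calc Real.exp (-M) * v ≤ Real.exp (-M) ^ ℓ * v := by gcongr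
      _ = (Real.exp (-M) * u) ^ ℓ := by rw [Real.mul_rpow (Real.exp_pos _).le hu.le]
      _ ≤ ((α+1) * u * Real.exp (-M)) ^ ℓ := by
          apply Real.rpow_le_rpow (by positivity) _ hℓ0.le
          nlinarith [mul_nonneg (mul_nonneg hα.le hu.le) (Real.exp_pos (-M)).le]
      _ ≤ (t ^ (α+1)) ^ ℓ := Real.rpow_le_rpow (by positivity) e2 hℓ0.le
  -- bounds on p
  have pub : p ≤ (α+1) * Real.exp (2*M) * v := by
    calc p ≤ Real.exp M * t ^ α := h4
      _ ≤ Real.exp M * ((α+1) * Real.exp M * v) := by gcongr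
      _ = (α+1) * Real.exp (2*M) * v := by rw [hE2]; ring
  have plb : Real.exp (-(2*M)) * v ≤ p := by
    have : Real.exp (-(2*M)) = Real.exp (-M) * Real.exp (-M) := by
      rw [← Real.exp_add]; ring_nf
    calc Real.exp (-(2*M)) * v = Real.exp (-M) * (Real.exp (-M) * v) := by rw [this]; ring
      _ ≤ Real.exp (-M) * t ^ α := by gcongr
      _ ≤ p := h3
  have hM2 : 0 < M2 := hm.trans_le (hg1.trans hg2)
  have huneg : u ^ (-ℓ) = v⁻¹ := by rw [Real.rpow_neg hu.le]
  constructor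
  · -- lower bound
    rw [huneg, hD]
    have heq : lam * m / ((α+1) * Real.exp (2*M)) * v⁻¹ =
        lam * m / ((α+1) * Real.exp (2*M) * v) := by
      field_simp
    rw [heq]
    apply div_le_div₀ (by nlinarith) (by nlinarith) hp pub
  · -- upper bound
    rw [huneg, hD, div_le_iff₀ hp]
    have k1 : (1:ℝ) ≤ Real.exp (2*M) * (v⁻¹ * p) := by
      have h5 : Real.exp (-(2*M)) ≤ v⁻¹ * p := by
        calc Real.exp (-(2*M)) = v⁻¹ * (Real.exp (-(2*M)) * v) := by
              field_simp
          _ ≤ v⁻¹ * p := by gcongr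
      calc (1:ℝ) = Real.exp (2*M) * Real.exp (-(2*M)) := by
            rw [← Real.exp_add]; simp
        _ ≤ Real.exp (2*M) * (v⁻¹ * p) := by gcongr
    calc lam * g ≤ lam * M2 := by nlinarith
      _ = lam * M2 * 1 := by ring
      _ ≤ lam * M2 * (Real.exp (2*M) * (v⁻¹ * p)) := by
          apply mul_le_mul_of_nonneg_left k1 (by positivity)
      _ = lam * M2 * Real.exp (2*M) * v⁻¹ * p := by ring
private lemma aux_deriv_nonneg {h h' : ℝ → ℝ}
    (hmono : StrictMonoOn h (Set.Icc (-1 : ℝ) 1))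
    (hhd : ∀ x ∈ Set.Icc (-1 : ℝ) 1, HasDerivWithinAt h (h' x) (Set.Icc (-1 : ℝ) 1) x) :
    ∀ w ∈ Set.Icc (-1 : ℝ) 1, 0 ≤ h' w := by
  intro w hw
  have hs := (hasDerivWithinAt_iff_tendsto_slope).mp (hhd w hw)
  haveI hne : (𝓝[Set.Icc (-1 : ℝ) 1 \ {w}] w).NeBot := by
    rcases lt_or_ge w 1 with hw1 | hw1
    · have hsub : Set.Ioc w 1 ⊆ Set.Icc (-1 : ℝ) 1 \ {w} := by
        intro z hz
        exact ⟨⟨le_trans hw.1 hz.1.le, hz.2⟩, hz.1.ne'⟩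
      have : w ∈ closure (Set.Ioc w 1) := by
        rw [closure_Ioc hw1.ne]
        exact ⟨le_rfl, hw1.le⟩
      have h1 : (𝓝[Set.Ioc w 1] w).NeBot := mem_closure_iff_nhdsWithin_neBot.mp this
      exact h1.mono (nhdsWithin_mono w hsub)
    · have hweq : w = 1 := le_antisymm hw.2 hw1
      have hsub : Set.Ico (-1 : ℝ) w ⊆ Set.Icc (-1 : ℝ) 1 \ {w} := by
        intro z hz
        exact ⟨⟨hz.1, hz.2.le.trans hw.2⟩, hz.2.ne⟩
      have hlt : (-1 : ℝ) < w := by rw [hweq]; norm_num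
      have : w ∈ closure (Set.Ico (-1 : ℝ) w) := by
        rw [closure_Ico hlt.ne]
        exact ⟨hlt.le, le_rfl⟩
      have h1 : (𝓝[Set.Ico (-1 : ℝ) w] w).NeBot := mem_closure_iff_nhdsWithin_neBot.mp this
      exact h1.mono (nhdsWithin_mono w hsub)
  refine ge_of_tendsto hs ?_
  filter_upwards [self_mem_nhdsWithin] with z hz
  rw [slope_def_field]
  rcases lt_or_gt_of_ne (Ne.symm hz.2) with hlt | hgt
  · -- w < z
    apply div_nonneg
    · exact sub_nonneg.2 (hmono hw hz.1 hlt).le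
    · exact sub_nonneg.2 hlt.le
  · -- z < w
    exact div_nonneg_of_nonpos (sub_nonpos.2 (hmono hz.1 hw hgt).le) (sub_nonpos.2 hgt.le)

private lemma aux_inv_cont {h hinv : ℝ → ℝ}
    (hmono : StrictMonoOn h (Set.Icc (-1 : ℝ) 1))
    (hbij : Set.BijOn h (Set.Icc (-1 : ℝ) 1) (Set.Icc (-1 : ℝ) 1))
    (hinvl : ∀ x ∈ Set.Icc (-1 : ℝ) 1, hinv (h x) = x)
    (hinvr : ∀ y ∈ Set.Icc (-1 : ℝ) 1, h (hinv y) = y)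
    (hm1 : h (-1) = -1) (hp1 : h 1 = 1) :
    ∀ x ∈ Set.Ioo (-1 : ℝ) 1, ContinuousAt hinv x := by
  have hinv_mem : ∀ z ∈ Set.Icc (-1 : ℝ) 1, hinv z ∈ Set.Icc (-1 : ℝ) 1 := by
    intro z hz
    obtain ⟨w, hw, rfl⟩ := hbij.surjOn hz
    rw [hinvl w hw]; exact hw
  have hinvmono : StrictMonoOn hinv (Set.Icc (-1 : ℝ) 1) := by
    intro a ha b hb hab
    by_contra hle
    push_neg at hle
    have : b ≤ a := by
      calc b = h (hinv b) := (hinvr b hb).symm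
        _ ≤ h (hinv a) := hmono.monotoneOn (hinv_mem b hb) (hinv_mem a ha) hle
        _ = a := hinvr a ha
    exact absurd hab (not_lt.2 this)
  intro x hx
  have hxI : x ∈ Set.Icc (-1 : ℝ) 1 := Set.Ioo_subset_Icc_self hx
  have hinvx : hinv x ∈ Set.Ioo (-1 : ℝ) 1 := by
    constructor
    · rcases (hinv_mem x hxI).1.lt_or_eq with hlt | heq
      · exact hlt
      · exfalso
        have : x = -1 := by rw [← hinvr x hxI, ← heq, hm1]
        exact absurd this hx.1.ne'
    · rcases (hinv_mem x hxI).2.lt_or_eq with hlt | heq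
      · exact hlt
      · exfalso
        have : x = 1 := by rw [← hinvr x hxI, heq, hp1]
        exact absurd this hx.2.ne
  exact hinvmono.continuousAt_of_image_mem_nhds
    (Icc_mem_nhds hx.1 hx.2)
    (by
      refine Filter.mem_of_superset (Icc_mem_nhds hinvx.1 hinvx.2) ?_
      intro w hw
      exact ⟨h w, hbij.mapsTo hw, hinvl w hw⟩)

private lemma aux_mvt_right {h h' : ℝ → ℝ} {α M δ' : ℝ} (hα : 0 < α) (hδ' : 0 < δ')
    (hc : ContinuousOn h (Set.Icc 0 δ'))
    (hd : ∀ z ∈ Set.Ioo 0 δ', HasDerivAt h (h' z) z)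
    (hlo : ∀ z ∈ Set.Ioo 0 δ', Real.exp (-M) * z ^ α ≤ h' z)
    (hhi : ∀ z ∈ Set.Ioo 0 δ', h' z ≤ Real.exp M * z ^ α) :
    ∀ y ∈ Set.Ioc 0 δ',
      Real.exp (-M) * y ^ (α+1) / (α+1) ≤ h y - h 0 ∧
      h y - h 0 ≤ Real.exp M * y ^ (α+1) / (α+1) := by
  have hα1 : (0:ℝ) < α + 1 := by linarith
  have hrc : ContinuousOn (fun z : ℝ => z ^ (α+1)) (Set.Icc 0 δ') :=
    continuousOn_id.rpow_const (fun z _ => Or.inr hα1.le)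
  have hrd : ∀ z ∈ Set.Ioo 0 δ', HasDerivAt (fun z : ℝ => z ^ (α+1)) ((α+1) * z ^ α) z := by
    intro z hz
    have := Real.hasDerivAt_rpow_const (x := z) (p := α+1) (Or.inl hz.1.ne')
    rwa [show α + 1 - 1 = α by ring] at this
  have key : ∀ c : ℝ, 0 < c → (∀ z ∈ Set.Ioo 0 δ', c * z ^ α ≤ h' z) →
      ∀ y ∈ Set.Ioc 0 δ', c * y ^ (α+1) / (α+1) ≤ h y - h 0 := by
    intro c hcpos hcle y hy
    have mono1 : MonotoneOn (fun z => h z - c * z ^ (α+1) / (α+1)) (Set.Icc 0 δ') := by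
      apply aux_mono (F' := fun z => h' z - c * ((α+1) * z ^ α) / (α+1))
      · exact hc.sub ((continuousOn_const.mul hrc).div_const _)
      · exact fun z hz => (hd z hz).sub (((hrd z hz).const_mul c).div_const _)
      · intro z hz
        have heq : c * ((α+1) * z ^ α) / (α+1) = c * z ^ α := by
          field_simp
        rw [heq, sub_nonneg]
        exact hcle z hz
    have := mono1 (Set.left_mem_Icc.2 hδ'.le) ⟨hy.1.le, hy.2⟩ hy.1.le
    simp only [Real.zero_rpow hα1.ne'] at this
    simp only [mul_zero, zero_div, sub_zero] at this
    linarith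
  have key2 : ∀ c : ℝ, 0 < c → (∀ z ∈ Set.Ioo 0 δ', h' z ≤ c * z ^ α) →
      ∀ y ∈ Set.Ioc 0 δ', h y - h 0 ≤ c * y ^ (α+1) / (α+1) := by
    intro c hcpos hcle y hy
    have mono1 : MonotoneOn (fun z => c * z ^ (α+1) / (α+1) - h z) (Set.Icc 0 δ') := by
      apply aux_mono (F' := fun z => c * ((α+1) * z ^ α) / (α+1) - h' z)
      · exact ((continuousOn_const.mul hrc).div_const _).sub hc
      · exact fun z hz => (((hrd z hz).const_mul c).div_const _).sub (hd z hz)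
      · intro z hz
        have heq : c * ((α+1) * z ^ α) / (α+1) = c * z ^ α := by
          field_simp
        rw [heq, sub_nonneg]
        exact hcle z hz
    have := mono1 (Set.left_mem_Icc.2 hδ'.le) ⟨hy.1.le, hy.2⟩ hy.1.le
    simp only [Real.zero_rpow hα1.ne'] at this
    simp only [mul_zero, zero_div, zero_sub, neg_le_sub_iff_le_add] at this
    linarith
  intro y hy
  exact ⟨key _ (Real.exp_pos _) hlo y hy, key2 _ (Real.exp_pos _) hhi y hy⟩

private lemma aux_mvt_left {h h' : ℝ → ℝ} {α M δ' : ℝ} (hα : 0 < α) (hδ' : 0 < δ')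
    (hc : ContinuousOn h (Set.Icc (-δ') 0))
    (hd : ∀ z ∈ Set.Ioo (-δ') 0, HasDerivAt h (h' z) z)
    (hlo : ∀ z ∈ Set.Ioo (-δ') 0, Real.exp (-M) * (-z) ^ α ≤ h' z)
    (hhi : ∀ z ∈ Set.Ioo (-δ') 0, h' z ≤ Real.exp M * (-z) ^ α) :
    ∀ y ∈ Set.Ico (-δ') 0,
      Real.exp (-M) * (-y) ^ (α+1) / (α+1) ≤ h 0 - h y ∧
      h 0 - h y ≤ Real.exp M * (-y) ^ (α+1) / (α+1) := by
  have hα1 : (0:ℝ) < α + 1 := by linarith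
  have hδ'le : -δ' ≤ (0:ℝ) := by linarith
  have hrc : ContinuousOn (fun z : ℝ => (-z) ^ (α+1)) (Set.Icc (-δ') 0) :=
    (continuousOn_id.neg).rpow_const (fun z _ => Or.inr hα1.le)
  have hrd : ∀ z ∈ Set.Ioo (-δ') 0,
      HasDerivAt (fun z : ℝ => (-z) ^ (α+1)) (-((α+1) * (-z) ^ α)) z := by
    intro z hz
    have h1 := Real.hasDerivAt_rpow_const (x := -z) (p := α+1)
      (Or.inl (neg_ne_zero.2 hz.2.ne))
    have h2 := h1.comp z (hasDerivAt_neg z)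
    rw [show α + 1 - 1 = α by ring] at h2
    exact h2.congr_deriv (by ring)
  have key : ∀ c : ℝ, 0 < c → (∀ z ∈ Set.Ioo (-δ') 0, c * (-z) ^ α ≤ h' z) →
      ∀ y ∈ Set.Ico (-δ') 0, c * (-y) ^ (α+1) / (α+1) ≤ h 0 - h y := by
    intro c hcpos hcle y hy
    have mono1 : MonotoneOn (fun z => h z + c * (-z) ^ (α+1) / (α+1)) (Set.Icc (-δ') 0) := by
      apply aux_mono (F' := fun z => h' z + c * (-((α+1) * (-z) ^ α)) / (α+1))
      · exact hc.add ((continuousOn_const.mul hrc).div_const _)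
      · exact fun z hz => (hd z hz).add (((hrd z hz).const_mul c).div_const _)
      · intro z hz
        have heq : c * (-((α+1) * (-z) ^ α)) / (α+1) = -(c * (-z) ^ α) := by
          field_simp
        rw [heq, ← sub_eq_add_neg, sub_nonneg]
        exact hcle z hz
    have := mono1 ⟨hy.1, hy.2.le⟩ (Set.right_mem_Icc.2 hδ'le) hy.2.le
    simp only [neg_zero, Real.zero_rpow hα1.ne'] at this
    simp only [mul_zero, zero_div, add_zero] at this
    linarith
  have key2 : ∀ c : ℝ, 0 < c → (∀ z ∈ Set.Ioo (-δ') 0, h' z ≤ c * (-z) ^ α) →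
      ∀ y ∈ Set.Ico (-δ') 0, h 0 - h y ≤ c * (-y) ^ (α+1) / (α+1) := by
    intro c hcpos hcle y hy
    have mono1 : MonotoneOn (fun z => -(h z + c * (-z) ^ (α+1) / (α+1))) (Set.Icc (-δ') 0) := by
      apply aux_mono (F' := fun z => -(h' z + c * (-((α+1) * (-z) ^ α)) / (α+1)))
      · exact (hc.add ((continuousOn_const.mul hrc).div_const _)).neg
      · exact fun z hz => ((hd z hz).add (((hrd z hz).const_mul c).div_const _)).neg
      · intro z hz
        have heq : c * (-((α+1) * (-z) ^ α)) / (α+1) = -(c * (-z) ^ α) := by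
          field_simp
        rw [heq, ← sub_eq_add_neg, neg_nonneg, sub_nonpos]
        exact hcle z hz
    have := mono1 ⟨hy.1, hy.2.le⟩ (Set.right_mem_Icc.2 hδ'le) hy.2.le
    simp only [neg_zero, Real.zero_rpow hα1.ne'] at this
    simp only [mul_zero, zero_div, add_zero, neg_le_neg_iff] at this
    linarith
  intro y hy
  exact ⟨key _ (Real.exp_pos _) hlo y hy, key2 _ (Real.exp_pos _) hhi y hy⟩

theorem lorenz_like_singularity_at_turning_point
    (lam : ℝ) (hlam1 : 1 < lam) (hlam2 : lam ≤ 2)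
    (T : ℝ → ℝ) (hT : ∀ x : ℝ, T x = lam * (1 - |x|) - 1)
    (c : ℕ → ℝ) (hc : ∀ i : ℕ, c i = T^[i] 0)
    (h : ℝ → ℝ) (h' : ℝ → ℝ) (hinv : ℝ → ℝ)
    (hmono : StrictMonoOn h (Set.Icc (-1 : ℝ) 1))
    (hbij : Set.BijOn h (Set.Icc (-1 : ℝ) 1) (Set.Icc (-1 : ℝ) 1))
    (hhd : ∀ x ∈ Set.Icc (-1 : ℝ) 1, HasDerivWithinAt h (h' x) (Set.Icc (-1 : ℝ) 1) x)
    (hC1 : ContinuousOn h' (Set.Icc (-1 : ℝ) 1))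
    (hinvl : ∀ x ∈ Set.Icc (-1 : ℝ) 1, hinv (h x) = x)
    (hinvr : ∀ y ∈ Set.Icc (-1 : ℝ) 1, h (hinv y) = y)
    (h'ne : ∀ x ∈ Set.Icc (-1 : ℝ) 1, x ≠ 0 → h' x ≠ 0)
    (h'0 : h' 0 = 0)
    (αp αm M δ : ℝ) (hαp : 0 < αp) (hαm : 0 < αm) (hM : 0 < M)
    (hδ : 0 < δ) (hδ1 : δ ≤ 1)
    (hnfp : ∀ x ∈ Set.Ioo (0 : ℝ) δ,
      Real.exp (-M) * x ^ αp ≤ h' x ∧ h' x ≤ Real.exp M * x ^ αp)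
    (hnfm : ∀ x ∈ Set.Ioo (-δ) (0 : ℝ),
      Real.exp (-M) * |x| ^ αm ≤ h' x ∧ h' x ≤ Real.exp M * |x| ^ αm)
    (f : ℝ → ℝ) (hfdef : ∀ x : ℝ, f x = h (T (hinv x)))
    (ct : ℝ) (hct : ct = h 0) :
    (0 < αp / (αp + 1) ∧ αp / (αp + 1) < 1) ∧
    (0 < αm / (αm + 1) ∧ αm / (αm + 1) < 1) ∧
    ∃ L δ₁ : ℝ, 0 < L ∧ 0 < δ₁ ∧
      (∀ x ∈ Set.Ioo ct (ct + δ₁),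
        L⁻¹ * |x - ct| ^ (-(αp / (αp + 1))) ≤ |deriv f x| ∧
        |deriv f x| ≤ L * |x - ct| ^ (-(αp / (αp + 1)))) ∧
      (∀ x ∈ Set.Ioo (ct - δ₁) ct,
        L⁻¹ * |x - ct| ^ (-(αm / (αm + 1))) ≤ |deriv f x| ∧
        |deriv f x| ≤ L * |x - ct| ^ (-(αm / (αm + 1)))) := by
  have hα1p : (0:ℝ) < αp + 1 := by linarith
  have hα1m : (0:ℝ) < αm + 1 := by linarith
  refine ⟨⟨div_pos hαp hα1p, (div_lt_one hα1p).2 (by linarith)⟩,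
    ⟨div_pos hαm hα1m, (div_lt_one hα1m).2 (by linarith)⟩, ?_⟩
  have hm1mem : (-1:ℝ) ∈ Set.Icc (-1:ℝ) 1 := by norm_num
  have hp1mem : (1:ℝ) ∈ Set.Icc (-1:ℝ) 1 := by norm_num
  have h0mem : (0:ℝ) ∈ Set.Icc (-1:ℝ) 1 := by norm_num
  have hlam0 : (0:ℝ) < lam := by linarith
  have hm1 : h (-1) = -1 := by
    obtain ⟨z, hz, hz1⟩ := hbij.surjOn hm1mem
    rcases hz.1.lt_or_eq with hzl | hze
    · have hlt := hmono hm1mem hz hzl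
      rw [hz1] at hlt
      exact le_antisymm hlt.le (hbij.mapsTo hm1mem).1
    · rw [← hze] at hz1; exact hz1
  have hp1 : h 1 = 1 := by
    obtain ⟨z, hz, hz1⟩ := hbij.surjOn hp1mem
    rcases hz.2.lt_or_eq with hzl | hze
    · have hlt := hmono hz hp1mem hzl
      rw [hz1] at hlt
      exact le_antisymm (hbij.mapsTo hp1mem).2 hlt.le
    · rw [hze] at hz1; exact hz1
  have hcont : ContinuousOn h (Set.Icc (-1:ℝ) 1) := fun z hz => (hhd z hz).continuousWithinAt
  have hct_mem : ct ∈ Set.Ioo (-1:ℝ) 1 := by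
    rw [hct]
    constructor
    · rw [← hm1]; exact hmono hm1mem h0mem (by norm_num)
    · rw [← hp1]; exact hmono h0mem hp1mem (by norm_num)
  have hinv_mem : ∀ z ∈ Set.Icc (-1:ℝ) 1, hinv z ∈ Set.Icc (-1:ℝ) 1 := by
    intro z hz
    obtain ⟨w, hw, rfl⟩ := hbij.surjOn hz
    rw [hinvl w hw]; exact hw
  have hinv_lt : ∀ a ∈ Set.Icc (-1:ℝ) 1, ∀ b ∈ Set.Icc (-1:ℝ) 1, a < b → hinv a < hinv b := by
    intro a ha b hb hab
    by_contra hle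
    push_neg at hle
    have hba : b ≤ a := by
      calc b = h (hinv b) := (hinvr b hb).symm
        _ ≤ h (hinv a) := hmono.monotoneOn (hinv_mem b hb) (hinv_mem a ha) hle
        _ = a := hinvr a ha
    exact absurd hab (not_lt.2 hba)
  have hinv0 : hinv ct = 0 := by rw [hct]; exact hinvl 0 h0mem
  have hcontinv := aux_inv_cont hmono hbij hinvl hinvr hm1 hp1
  have h'nonneg := aux_deriv_nonneg hmono hhd
  -- the auxiliary radius δ'
  set δ' : ℝ := min δ ((lam-1)/(2*lam)) / 2 with hδ'def
  have hδ'pos : 0 < δ' := by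
    have h1 : (0:ℝ) < (lam-1)/(2*lam) := div_pos (by linarith) (by linarith)
    have := lt_min hδ h1
    rw [hδ'def]
    linarith
  have hδ'δ : δ' < δ := by
    have := min_le_left δ ((lam-1)/(2*lam))
    rw [hδ'def]; linarith
  have hkeylam : (lam-1)/(2*lam) * (2*lam) = lam - 1 := by field_simp
  have hA2 : 2*δ' ≤ (lam-1)/(2*lam) := by
    have := min_le_right δ ((lam-1)/(2*lam))
    rw [hδ'def]; linarith
  have hδ'lam : 4 * (lam * δ') ≤ lam - 1 := by
    nlinarith [mul_le_mul_of_nonneg_right hA2 (by positivity : (0:ℝ) ≤ 2*lam)]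
  have hδ'1 : δ' < 1 := by
    have := min_le_left δ ((lam-1)/(2*lam))
    rw [hδ'def]; linarith
  have hδ'mem : δ' ∈ Set.Icc (-1:ℝ) 1 := ⟨by linarith, by linarith⟩
  have hmδ'mem : -δ' ∈ Set.Icc (-1:ℝ) 1 := ⟨by linarith, by linarith⟩
  -- bounds of h' on the compact set K
  have hKsub : Set.Icc ((lam-1)/2) (lam-1) ⊆ Set.Icc (-1:ℝ) 1 := by
    intro z hz
    exact ⟨by nlinarith [hz.1], by nlinarith [hz.2]⟩
  have hKne : (Set.Icc ((lam-1)/2) (lam-1)).Nonempty := ⟨lam-1, by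
    constructor <;> linarith⟩
  obtain ⟨zm, hzm, hzmle⟩ := isCompact_Icc.exists_isMinOn hKne (hC1.mono hKsub)
  obtain ⟨zM, hzM, hzMge⟩ := isCompact_Icc.exists_isMaxOn hKne (hC1.mono hKsub)
  have hzmle' := isMinOn_iff.mp hzmle
  have hzMge' := isMaxOn_iff.mp hzMge
  set m : ℝ := h' zm with hmdef
  set M2 : ℝ := h' zM with hM2def
  have hzm0 : zm ≠ 0 := by
    have := hzm.1; exact (by nlinarith : (0:ℝ) < zm).ne'
  have hmpos : 0 < m :=
    lt_of_le_of_ne (h'nonneg zm (hKsub hzm)) (Ne.symm (h'ne zm (hKsub hzm) hzm0))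
  have hM2pos : 0 < M2 := hmpos.trans_le (hzmle' zM hzM)
  -- MVT-type bounds
  have hIccR : Set.Icc (0:ℝ) δ' ⊆ Set.Icc (-1:ℝ) 1 :=
    fun z hz => ⟨by linarith [hz.1], by linarith [hz.2]⟩
  have hIccL : Set.Icc (-δ') (0:ℝ) ⊆ Set.Icc (-1:ℝ) 1 :=
    fun z hz => ⟨by linarith [hz.1], by linarith [hz.2]⟩
  have hdR : ∀ z ∈ Set.Ioo (0:ℝ) δ', HasDerivAt h (h' z) z := by
    intro z hz
    exact (hhd z (hIccR (Set.Ioo_subset_Icc_self hz))).hasDerivAt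
      (Icc_mem_nhds (by linarith [hz.1]) (by linarith [hz.2]))
  have hdL : ∀ z ∈ Set.Ioo (-δ') (0:ℝ), HasDerivAt h (h' z) z := by
    intro z hz
    exact (hhd z (hIccL (Set.Ioo_subset_Icc_self hz))).hasDerivAt
      (Icc_mem_nhds (by linarith [hz.1]) (by linarith [hz.2]))
  have hmvtR := aux_mvt_right hαp hδ'pos (hcont.mono hIccR) hdR
    (fun z hz => (hnfp z ⟨hz.1, hz.2.trans hδ'δ⟩).1)
    (fun z hz => (hnfp z ⟨hz.1, hz.2.trans hδ'δ⟩).2)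
  have hmvtL := aux_mvt_left hαm hδ'pos (hcont.mono hIccL) hdL
    (fun z hz => by
      have := (hnfm z ⟨by linarith [hz.1], hz.2⟩).1
      rwa [abs_of_neg hz.2] at this)
    (fun z hz => by
      have := (hnfm z ⟨by linarith [hz.1], hz.2⟩).2
      rwa [abs_of_neg hz.2] at this)
  -- the constants
  set L : ℝ := max (2*M2*Real.exp (2*M) + 1)
      (max ((αp+1)*Real.exp (2*M)/(lam*m) + 1) ((αm+1)*Real.exp (2*M)/(lam*m) + 1)) with hLdef
  have hLpos : 0 < L := by
    have h1 : (0:ℝ) < 2*M2*Real.exp (2*M) + 1 := by positivity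
    exact lt_of_lt_of_le h1 (le_max_left _ _)
  set δ₁ : ℝ := min (h δ' - ct) (ct - h (-δ')) with hδ₁def
  have hδ₁pos : 0 < δ₁ := by
    apply lt_min
    · have : ct < h δ' := by rw [hct]; exact hmono h0mem hδ'mem hδ'pos
      linarith
    · have : h (-δ') < ct := by rw [hct]; exact hmono hmδ'mem h0mem (by linarith)
      linarith
  have hLlb_p : (αp+1)*Real.exp (2*M)/(lam*m) ≤ L := by
    calc (αp+1)*Real.exp (2*M)/(lam*m) ≤ (αp+1)*Real.exp (2*M)/(lam*m) + 1 := by linarith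
      _ ≤ max ((αp+1)*Real.exp (2*M)/(lam*m) + 1) ((αm+1)*Real.exp (2*M)/(lam*m) + 1) :=
          le_max_left _ _
      _ ≤ L := le_max_right _ _
  have hLlb_m : (αm+1)*Real.exp (2*M)/(lam*m) ≤ L := by
    calc (αm+1)*Real.exp (2*M)/(lam*m) ≤ (αm+1)*Real.exp (2*M)/(lam*m) + 1 := by linarith
      _ ≤ max ((αp+1)*Real.exp (2*M)/(lam*m) + 1) ((αm+1)*Real.exp (2*M)/(lam*m) + 1) :=
          le_max_right _ _
      _ ≤ L := le_max_right _ _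
  have hLub : lam * M2 * Real.exp (2*M) ≤ L := by
    calc lam * M2 * Real.exp (2*M) ≤ 2*M2*Real.exp (2*M) := by
          nlinarith [mul_nonneg (mul_nonneg (by linarith : (0:ℝ) ≤ 2 - lam) hM2pos.le) (Real.exp_pos (2*M)).le]
      _ ≤ 2*M2*Real.exp (2*M) + 1 := by linarith
      _ ≤ L := le_max_left _ _
  refine ⟨L, δ₁, hLpos, hδ₁pos, ?_, ?_⟩
  · -- right side
    intro x hx
    have hxlt : x < h δ' := by
      have h1 := min_le_left (h δ' - ct) (ct - h (-δ'))
      have h2 := hx.2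
      rw [hδ₁def] at h2
      linarith
    have hhδ'le1 : h δ' ≤ 1 := (hbij.mapsTo hδ'mem).2
    have hxI : x ∈ Set.Ioo (-1:ℝ) 1 :=
      ⟨by linarith [hct_mem.1, hx.1], lt_of_lt_of_le hxlt hhδ'le1⟩
    have hxI01 : x ∈ Set.Icc (-1:ℝ) 1 := Set.Ioo_subset_Icc_self hxI
    set y : ℝ := hinv x with hydef
    have hy0 : 0 < y := by
      have := hinv_lt ct (Set.Ioo_subset_Icc_self hct_mem) x hxI01 hx.1
      rwa [hinv0] at this
    have hyδ' : y < δ' := by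
      have := hinv_lt x hxI01 (h δ') (hbij.mapsTo hδ'mem) hxlt
      rwa [hinvl δ' hδ'mem] at this
    have hhy : h y = x := hinvr x hxI01
    have hyI : y ∈ Set.Ioo (-1:ℝ) 1 := ⟨by linarith, by linarith⟩
    have hdh_y : HasDerivAt h (h' y) y :=
      (hhd y (Set.Ioo_subset_Icc_self hyI)).hasDerivAt (Icc_mem_nhds hyI.1 hyI.2)
    have hh'ylb := (hnfp y ⟨hy0, hyδ'.trans hδ'δ⟩).1
    have hh'yub := (hnfp y ⟨hy0, hyδ'.trans hδ'δ⟩).2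
    have hh'ypos : 0 < h' y := lt_of_lt_of_le (by positivity) hh'ylb
    have hcx : ContinuousAt hinv x := hcontinv x hxI
    have hdinv : HasDerivAt hinv (h' y)⁻¹ x := by
      apply HasDerivAt.of_local_left_inverse hcx hdh_y hh'ypos.ne'
      filter_upwards [Ioo_mem_nhds hxI.1 hxI.2] with z hz
      exact hinvr z (Set.Ioo_subset_Icc_self hz)
    set ey : ℝ := lam - 1 - lam * y with heydef
    have heyK : ey ∈ Set.Icc ((lam-1)/2) (lam-1) := by
      constructor
      · rw [heydef]
        nlinarith [mul_lt_mul_of_pos_left hyδ' hlam0]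
      · rw [heydef]
        nlinarith [mul_pos hlam0 hy0]
    have heyI : ey ∈ Set.Ioo (-1:ℝ) 1 := by
      constructor
      · nlinarith [heyK.1]
      · rw [heydef]
        nlinarith [mul_pos hlam0 hy0]
    have hdh_e : HasDerivAt h (h' ey) ey :=
      (hhd ey (hKsub heyK)).hasDerivAt (Icc_mem_nhds heyI.1 heyI.2)
    have hinner : HasDerivAt (fun z => lam - 1 - lam * hinv z) (-(lam * 1) * (h' y)⁻¹) x := by
      have h1 : HasDerivAt (fun w : ℝ => lam - 1 - lam * w) (-(lam * 1)) y :=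
        ((hasDerivAt_id y).const_mul lam).const_sub (lam - 1)
      have := h1.comp x hdinv
      simpa [Function.comp_def] using this
    have houter : HasDerivAt (fun z => h (lam - 1 - lam * hinv z))
        (h' ey * (-(lam * 1) * (h' y)⁻¹)) x := by
      have := hdh_e.comp x hinner
      simpa [Function.comp_def] using this
    have hfeq : f =ᶠ[𝓝 x] fun z => h (lam - 1 - lam * hinv z) := by
      have hev1 : hinv ⁻¹' Set.Ioo (0:ℝ) δ' ∈ 𝓝 x :=
        hcx.preimage_mem_nhds (Ioo_mem_nhds hy0 hyδ')
      filter_upwards [hev1] with z hz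
      rw [hfdef z, hT, abs_of_pos hz.1]
      congr 1
      ring
    have hder : HasDerivAt f (h' ey * (-(lam * 1) * (h' y)⁻¹)) x :=
      houter.congr_of_eventuallyEq hfeq
    have heyKlb : m ≤ h' ey := hzmle' ey heyK
    have heyKub : h' ey ≤ M2 := hzMge' ey heyK
    have habs : |deriv f x| = lam * h' ey / h' y := by
      rw [hder.deriv]
      have heq : h' ey * (-(lam * 1) * (h' y)⁻¹) = -(lam * h' ey / h' y) := by
        field_simp [hh'ypos.ne']
      rw [heq, abs_neg, abs_of_nonneg]
      exact div_nonneg (mul_nonneg hlam0.le (hmpos.le.trans heyKlb)) hh'ypos.le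
    have hmvt := hmvtR y ⟨hy0, hyδ'.le⟩
    have hu1 : Real.exp (-M) * y ^ (αp+1) / (αp+1) ≤ x - ct := by
      rw [← hhy, hct]; exact hmvt.1
    have hu2 : x - ct ≤ Real.exp M * y ^ (αp+1) / (αp+1) := by
      rw [← hhy, hct]; exact hmvt.2
    have hupos : 0 < x - ct := sub_pos.2 hx.1
    have hest := aux_est hαp hM hlam0 hmpos hy0 hupos hh'ypos hu1 hu2 hh'ylb hh'yub
      habs heyKlb heyKub
    rw [abs_of_pos hupos]
    constructor
    · refine le_trans ?_ hest.1
      apply mul_le_mul_of_nonneg_right _ (Real.rpow_nonneg hupos.le _)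
      have hLge : (lam * m / ((αp+1) * Real.exp (2*M)))⁻¹ ≤ L := by
        rw [inv_div]
        calc ((αp+1) * Real.exp (2*M)) / (lam * m)
            = (αp+1) * Real.exp (2*M) / (lam*m) := by ring_nf
          _ ≤ L := hLlb_p
      calc L⁻¹ ≤ ((lam * m / ((αp+1) * Real.exp (2*M)))⁻¹)⁻¹ :=
            inv_anti₀ (by positivity) hLge
        _ = lam * m / ((αp+1) * Real.exp (2*M)) := inv_inv _
    · refine le_trans hest.2 ?_
      exact mul_le_mul_of_nonneg_right hLub (Real.rpow_nonneg hupos.le _)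
  · -- left side
    intro x hx
    have hxgt : h (-δ') < x := by
      have h1 := min_le_right (h δ' - ct) (ct - h (-δ'))
      have h2 := hx.1
      rw [hδ₁def] at h2
      linarith
    have hhδ'ge : (-1:ℝ) ≤ h (-δ') := (hbij.mapsTo hmδ'mem).1
    have hxI : x ∈ Set.Ioo (-1:ℝ) 1 :=
      ⟨lt_of_le_of_lt hhδ'ge hxgt, by linarith [hct_mem.2, hx.2]⟩
    have hxI01 : x ∈ Set.Icc (-1:ℝ) 1 := Set.Ioo_subset_Icc_self hxI
    set y : ℝ := hinv x with hydef
    have hy0 : y < 0 := by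
      have := hinv_lt x hxI01 ct (Set.Ioo_subset_Icc_self hct_mem) hx.2
      rwa [hinv0] at this
    have hyδ' : -δ' < y := by
      have := hinv_lt (h (-δ')) (hbij.mapsTo hmδ'mem) x hxI01 hxgt
      rwa [hinvl (-δ') hmδ'mem] at this
    have hhy : h y = x := hinvr x hxI01
    have hyI : y ∈ Set.Ioo (-1:ℝ) 1 := ⟨by linarith, by linarith⟩
    have hdh_y : HasDerivAt h (h' y) y :=
      (hhd y (Set.Ioo_subset_Icc_self hyI)).hasDerivAt (Icc_mem_nhds hyI.1 hyI.2)
    have hh'ylb : Real.exp (-M) * (-y) ^ αm ≤ h' y := by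
      have := (hnfm y ⟨by linarith, hy0⟩).1
      rwa [abs_of_neg hy0] at this
    have hh'yub : h' y ≤ Real.exp M * (-y) ^ αm := by
      have := (hnfm y ⟨by linarith, hy0⟩).2
      rwa [abs_of_neg hy0] at this
    have hmy0 : 0 < -y := by linarith
    have hh'ypos : 0 < h' y := lt_of_lt_of_le (by positivity) hh'ylb
    have hcx : ContinuousAt hinv x := hcontinv x hxI
    have hdinv : HasDerivAt hinv (h' y)⁻¹ x := by
      apply HasDerivAt.of_local_left_inverse hcx hdh_y hh'ypos.ne'
      filter_upwards [Ioo_mem_nhds hxI.1 hxI.2] with z hz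
      exact hinvr z (Set.Ioo_subset_Icc_self hz)
    set ey : ℝ := lam - 1 + lam * y with heydef
    have heyK : ey ∈ Set.Icc ((lam-1)/2) (lam-1) := by
      constructor
      · rw [heydef]
        nlinarith [mul_lt_mul_of_pos_left hyδ' hlam0]
      · rw [heydef]
        nlinarith [mul_neg_of_pos_of_neg hlam0 hy0]
    have heyI : ey ∈ Set.Ioo (-1:ℝ) 1 := by
      constructor
      · nlinarith [heyK.1]
      · rw [heydef]
        nlinarith [mul_neg_of_pos_of_neg hlam0 hy0]
    have hdh_e : HasDerivAt h (h' ey) ey :=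
      (hhd ey (hKsub heyK)).hasDerivAt (Icc_mem_nhds heyI.1 heyI.2)
    have hinner : HasDerivAt (fun z => lam - 1 + lam * hinv z) (lam * 1 * (h' y)⁻¹) x := by
      have h1 : HasDerivAt (fun w : ℝ => lam - 1 + lam * w) (lam * 1) y :=
        ((hasDerivAt_id y).const_mul lam).const_add (lam - 1)
      have := h1.comp x hdinv
      simpa [Function.comp_def] using this
    have houter : HasDerivAt (fun z => h (lam - 1 + lam * hinv z))
        (h' ey * (lam * 1 * (h' y)⁻¹)) x := by
      have := hdh_e.comp x hinner
      simpa [Function.comp_def] using this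
    have hfeq : f =ᶠ[𝓝 x] fun z => h (lam - 1 + lam * hinv z) := by
      have hev1 : hinv ⁻¹' Set.Ioo (-δ') (0:ℝ) ∈ 𝓝 x :=
        hcx.preimage_mem_nhds (Ioo_mem_nhds hyδ' hy0)
      filter_upwards [hev1] with z hz
      rw [hfdef z, hT, abs_of_neg hz.2]
      congr 1
      ring
    have hder : HasDerivAt f (h' ey * (lam * 1 * (h' y)⁻¹)) x :=
      houter.congr_of_eventuallyEq hfeq
    have heyKlb : m ≤ h' ey := hzmle' ey heyK
    have heyKub : h' ey ≤ M2 := hzMge' ey heyK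
    have habs : |deriv f x| = lam * h' ey / h' y := by
      rw [hder.deriv]
      have heq : h' ey * (lam * 1 * (h' y)⁻¹) = lam * h' ey / h' y := by
        field_simp [hh'ypos.ne']
      rw [heq, abs_of_nonneg]
      exact div_nonneg (mul_nonneg hlam0.le (hmpos.le.trans heyKlb)) hh'ypos.le
    have hmvt := hmvtL y ⟨hyδ'.le, hy0⟩
    have hu1 : Real.exp (-M) * (-y) ^ (αm+1) / (αm+1) ≤ ct - x := by
      rw [← hhy, hct]; exact hmvt.1
    have hu2 : ct - x ≤ Real.exp M * (-y) ^ (αm+1) / (αm+1) := by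
      rw [← hhy, hct]; exact hmvt.2
    have hupos : 0 < ct - x := sub_pos.2 hx.2
    have hest := aux_est hαm hM hlam0 hmpos hmy0 hupos hh'ypos hu1 hu2 hh'ylb hh'yub
      habs heyKlb heyKub
    have habsx : |x - ct| = ct - x := by
      rw [abs_sub_comm, abs_of_pos hupos]
    rw [habsx]
    constructor
    · refine le_trans ?_ hest.1
      apply mul_le_mul_of_nonneg_right _ (Real.rpow_nonneg hupos.le _)
      have hLge : (lam * m / ((αm+1) * Real.exp (2*M)))⁻¹ ≤ L := by
        rw [inv_div]
        calc ((αm+1) * Real.exp (2*M)) / (lam * m)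
            = (αm+1) * Real.exp (2*M) / (lam*m) := by ring_nf
          _ ≤ L := hLlb_m
      calc L⁻¹ ≤ ((lam * m / ((αm+1) * Real.exp (2*M)))⁻¹)⁻¹ :=
            inv_anti₀ (by positivity) hLge
        _ = lam * m / ((αm+1) * Real.exp (2*M)) := inv_inv _
    · refine le_trans hest.2 ?_
      exact mul_le_mul_of_nonneg_right hLub (Real.rpow_nonneg hupos.le _)
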